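/- For λ > 0 and n ∈ ℕ, let C_n^{(λ)} be the Gegenbauer polynomial and for ℓ > 0 expand C_n^{(ℓ)} in terms of C^{(λ)}: C_n^{(ℓ)}(x) = Σ_{k=0}^{⌊n/2⌋} (-1)^k (Γ(ℓ+n-k) Γ(λ) / (k! Γ(ℓ))) Σ_{j=0}^{⌊(n-2k)/2⌋} (λ+n-2(k+j)) / (j! Γ(λ+n-2k+1-j)) · C^{(λ)}_{n-2(k+j)}(x), as an identity of polynomials. -/

import Mathlib

/-- The Gegenbauer polynomial `C_n^{(l)}`, via its explicit formula. -/
noncomputable def gegenbauer (l : ℝ) (n : ℕ) (x : ℝ) : ℝ :=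
  ∑ k ∈ Finset.range (n / 2 + 1),
    (-1 : ℝ) ^ k *
      (Real.Gamma (l + n - k) /
        ((k.factorial : ℝ) * ((n - 2 * k).factorial : ℝ) * Real.Gamma l)) *
      (2 * x) ^ (n - 2 * k)

open Finset


lemma gamma_rec {y : ℝ} (hy : 0 < y) : Real.Gamma (y + 1) = y * Real.Gamma y :=
  Real.Gamma_add_one hy.ne'

/-- Key combinatorial identity. -/
lemma key_sum (a : ℝ) (ha : 0 < a) (s : ℕ) :
    ∑ i ∈ range (s + 1),
      (-1 : ℝ) ^ i * ((a + 2 * i) * Real.Gamma (a + i)) /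
        (((s - i).factorial : ℝ) * (i.factorial : ℝ) * Real.Gamma (a + s + 1 + i)) =
      if s = 0 then 1 else 0 := by
  rcases Nat.eq_zero_or_pos s with rfl | hs
  · simp only [if_pos rfl, zero_add, Finset.sum_range_one, Nat.cast_zero, Nat.sub_zero,
      Nat.factorial_zero, Nat.cast_one, add_zero, mul_zero, mul_one, one_mul, pow_zero]
    rw [gamma_rec ha]
    have hG : Real.Gamma a ≠ 0 := (Real.Gamma_pos_of_pos ha).ne'
    field_simp
    simp
  · rw [if_neg hs.ne']
    -- telescoping: define v i
    set v : ℕ → ℝ := fun i =>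
      (-1 : ℝ) ^ i * (i * Real.Gamma (a + i)) /
        ((i.factorial : ℝ) * ((s - i).factorial : ℝ) * Real.Gamma (a + s + i)) with hv
    have hstep : ∀ i < s,
        (s : ℝ) * ((-1 : ℝ) ^ i * ((a + 2 * i) * Real.Gamma (a + i)) /
          (((s - i).factorial : ℝ) * (i.factorial : ℝ) * Real.Gamma (a + s + 1 + i)))
        = v i - v (i + 1) := by
      intro i hi
      obtain ⟨d, rfl⟩ : ∃ d, s = i + d + 1 := ⟨s - i - 1, by omega⟩
      simp only [hv]
      have e1 : (i + d + 1 : ℕ) - i = d + 1 := by omega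
      have e2 : (i + d + 1 : ℕ) - (i + 1) = d := by omega
      rw [e1, e2]
      have hai : (0:ℝ) < a + i := by positivity
      have hasi : (0:ℝ) < a + (i + d + 1 : ℕ) + i := by positivity
      have g1 : Real.Gamma (a + (i + d + 1 : ℕ) + 1 + i)
          = (a + (i + d + 1 : ℕ) + i) * Real.Gamma (a + (i + d + 1 : ℕ) + i) := by
        rw [show a + ((i + d + 1 : ℕ):ℝ) + 1 + i = (a + (i + d + 1 : ℕ) + i) + 1 by ring,
          gamma_rec hasi]
      have g2 : Real.Gamma (a + ((i:ℕ) + 1 : ℕ))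
          = (a + i) * Real.Gamma (a + i) := by
        rw [show a + (((i:ℕ) + 1 : ℕ):ℝ) = (a + i) + 1 by push_cast; ring, gamma_rec hai]
      have g3 : Real.Gamma (a + (i + d + 1 : ℕ) + ((i:ℕ)+1:ℕ))
          = (a + (i + d + 1 : ℕ) + i) * Real.Gamma (a + (i + d + 1 : ℕ) + i) := by
        rw [show a + ((i + d + 1 : ℕ):ℝ) + (((i:ℕ) + 1 : ℕ):ℝ)
            = (a + (i + d + 1 : ℕ) + i) + 1 by push_cast; ring, gamma_rec hasi]
      rw [g1, g3]
      have hfac1 : ((i+1).factorial : ℝ) = (i+1) * i.factorial := by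
        rw [Nat.factorial_succ]; push_cast; ring
      have hfac2 : ((d+1).factorial : ℝ) = (d+1) * d.factorial := by
        rw [Nat.factorial_succ]; push_cast; ring
      rw [pow_succ, hfac1, hfac2, g2]
      have h1 : ((i.factorial : ℝ)) ≠ 0 := by positivity
      have h2 : ((d.factorial : ℝ)) ≠ 0 := by positivity
      have h3 : Real.Gamma (a + (i + d + 1 : ℕ) + i) ≠ 0 :=
        (Real.Gamma_pos_of_pos hasi).ne'
      have h4 : (a + (i + d + 1 : ℕ) + i) ≠ 0 := hasi.ne'
      push_cast
      field_simp
      ring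
    have hlast : (s : ℝ) * ((-1 : ℝ) ^ s * ((a + 2 * s) * Real.Gamma (a + s)) /
        (((s - s).factorial : ℝ) * (s.factorial : ℝ) * Real.Gamma (a + s + 1 + s)))
        = v s := by
      simp only [hv, Nat.sub_self, Nat.factorial_zero]
      have has2 : (0:ℝ) < a + s + s := by positivity
      rw [show a + (s:ℝ) + 1 + s = (a + s + s) + 1 by ring, gamma_rec has2]
      have h3 : Real.Gamma (a + s + s) ≠ 0 := (Real.Gamma_pos_of_pos has2).ne'
      have h1 : ((s.factorial : ℝ)) ≠ 0 := by positivity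
      field_simp
      ring
    have hmul : (s : ℝ) * ∑ i ∈ range (s + 1),
        (-1 : ℝ) ^ i * ((a + 2 * i) * Real.Gamma (a + i)) /
          (((s - i).factorial : ℝ) * (i.factorial : ℝ) * Real.Gamma (a + s + 1 + i)) = 0 := by
      rw [Finset.mul_sum, Finset.sum_range_succ, hlast,
        Finset.sum_congr rfl (fun i hi => hstep i (Finset.mem_range.mp hi)),
        Finset.sum_range_sub' v]
      simp [hv]
    have hs' : (s : ℝ) ≠ 0 := Nat.cast_ne_zero.mpr hs.ne'
    exact (mul_eq_zero.mp hmul).resolve_left hs'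


lemma reindex (m : ℕ) (f : ℕ → ℕ → ℝ) :
    ∑ j ∈ range (m / 2 + 1), ∑ i ∈ range ((m - 2 * j) / 2 + 1), f j i
    = ∑ s ∈ range (m / 2 + 1), ∑ i ∈ range (s + 1), f (s - i) i := by
  rw [Finset.sum_sigma', Finset.sum_sigma']
  apply Finset.sum_nbij' (fun p => ⟨p.1 + p.2, p.2⟩) (fun p => ⟨p.1 - p.2, p.2⟩) <;>
    simp only [Finset.mem_sigma, Finset.mem_range, Nat.lt_succ_iff] <;>
    rintro ⟨p1, p2⟩ hp
  · omega
  · omega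
  · simp only at hp; rw [show p1 + p2 - p2 = p1 from by omega]
  · simp only at hp; rw [show p1 - p2 + p2 = p1 from by omega]
  · simp only; congr 1; omega

lemma monomial_expansion (lam : ℝ) (hlam : 0 < lam) (m : ℕ) (x : ℝ) :
    (2 * x) ^ m = Real.Gamma lam * (m.factorial : ℝ) *
      ∑ j ∈ range (m / 2 + 1),
        (lam + m - 2 * j) / ((j.factorial : ℝ) * Real.Gamma (lam + m + 1 - j)) *
          gegenbauer lam (m - 2 * j) x := by
  simp only [gegenbauer, Finset.mul_sum]
  rw [reindex m (fun j i =>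
    Real.Gamma lam * (m.factorial : ℝ) *
    ((lam + m - 2 * j) / ((j.factorial : ℝ) * Real.Gamma (lam + m + 1 - j)) *
      ((-1 : ℝ) ^ i * (Real.Gamma (lam + (m - 2 * j : ℕ) - i) /
        ((i.factorial : ℝ) * ((m - 2 * j - 2 * i).factorial : ℝ) * Real.Gamma lam)) *
      (2 * x) ^ (m - 2 * j - 2 * i))))]
  have hmain : ∀ s ∈ range (m / 2 + 1),
      (∑ i ∈ range (s + 1),
        Real.Gamma lam * (m.factorial : ℝ) *
        ((lam + m - 2 * (s - i : ℕ)) /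
            (((s - i).factorial : ℝ) * Real.Gamma (lam + m + 1 - (s - i : ℕ))) *
          ((-1 : ℝ) ^ i * (Real.Gamma (lam + (m - 2 * (s - i) : ℕ) - i) /
            ((i.factorial : ℝ) * ((m - 2 * (s - i) - 2 * i).factorial : ℝ) * Real.Gamma lam)) *
          (2 * x) ^ (m - 2 * (s - i) - 2 * i))))
      = if s = 0 then (2 * x) ^ m else 0 := by
    intro s hs
    rw [Finset.mem_range, Nat.lt_succ_iff] at hs
    have h2s : 2 * s ≤ m := by omega
    set a : ℝ := lam + ((m - 2 * s : ℕ) : ℝ) with ha_def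
    have ha : 0 < a := by positivity
    have hstep : ∀ i ∈ range (s + 1),
        Real.Gamma lam * (m.factorial : ℝ) *
        ((lam + m - 2 * (s - i : ℕ)) /
            (((s - i).factorial : ℝ) * Real.Gamma (lam + m + 1 - (s - i : ℕ))) *
          ((-1 : ℝ) ^ i * (Real.Gamma (lam + (m - 2 * (s - i) : ℕ) - i) /
            ((i.factorial : ℝ) * ((m - 2 * (s - i) - 2 * i).factorial : ℝ) * Real.Gamma lam)) *
          (2 * x) ^ (m - 2 * (s - i) - 2 * i)))
        = ((-1 : ℝ) ^ i * ((a + 2 * i) * Real.Gamma (a + i)) /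
            (((s - i).factorial : ℝ) * (i.factorial : ℝ) * Real.Gamma (a + s + 1 + i))) *
          ((m.factorial : ℝ) / ((m - 2 * s).factorial : ℝ) * (2 * x) ^ (m - 2 * s)) := by
      intro i hi
      rw [Finset.mem_range, Nat.lt_succ_iff] at hi
      have e1 : m - 2 * (s - i) - 2 * i = m - 2 * s := by omega
      have e2 : (m - 2 * (s - i) : ℕ) = (m - 2 * s) + 2 * i := by omega
      have c1 : ((m - 2 * s : ℕ) : ℝ) = (m : ℝ) - 2 * s := by
        push_cast [Nat.cast_sub h2s]; ring
      have c2 : ((s - i : ℕ) : ℝ) = (s : ℝ) - i := by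
        push_cast [Nat.cast_sub hi]; ring
      rw [e1, e2]
      have g1 : lam + (((m - 2 * s) + 2 * i : ℕ) : ℝ) - i = a + i := by
        push_cast [ha_def]; ring
      have g2 : lam + (m : ℝ) - 2 * ((s - i : ℕ) : ℝ) = a + 2 * i := by
        rw [c2, ha_def, c1]; ring
      have g3 : lam + (m : ℝ) + 1 - ((s - i : ℕ) : ℝ) = a + s + 1 + i := by
        rw [c2, ha_def, c1]; ring
      rw [g1, g2, g3]
      have h1 : (((s - i).factorial : ℝ)) ≠ 0 := by positivity
      have h2 : ((i.factorial : ℝ)) ≠ 0 := by positivity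
      have h3 : (((m - 2 * s).factorial : ℝ)) ≠ 0 := by positivity
      have h4 : Real.Gamma lam ≠ 0 := (Real.Gamma_pos_of_pos hlam).ne'
      have h5 : Real.Gamma (a + s + 1 + i) ≠ 0 := by
        refine (Real.Gamma_pos_of_pos ?_).ne'; positivity
      field_simp
    rw [Finset.sum_congr rfl hstep, ← Finset.sum_mul, key_sum a ha s]
    by_cases hs0 : s = 0
    · subst hs0
      have h3 : ((m.factorial : ℝ)) ≠ 0 := by positivity
      simp only [if_pos rfl, one_mul, Nat.mul_zero, Nat.sub_zero]
      rw [div_self h3, one_mul]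
      simp
    · rw [if_neg hs0, if_neg hs0, zero_mul]
  rw [Finset.sum_congr rfl hmain, Finset.sum_ite_eq' (range (m / 2 + 1)) 0
    (fun _ => (2 * x) ^ m), if_pos (by simp)]


/-- connection formula expressing a Gegenbauer polynomial of
weight `ℓ` in terms of Gegenbauer polynomials of weight `λ`:
`C_n^{(ℓ)}(x) = Σ_{k=0}^{⌊n/2⌋} (-1)^k (Γ(ℓ+n-k) Γ(λ) / (k! Γ(ℓ)))
  Σ_{j=0}^{⌊(n-2k)/2⌋} (λ+n-2(k+j))/(j! Γ(λ+n-2k+1-j)) C^{(λ)}_{n-2(k+j)}(x)`. -/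
theorem gegenbauer_connection_formula (lam ell : ℝ) (hlam : 0 < lam)
    (hell : 0 < ell) (n : ℕ) (x : ℝ) :
    gegenbauer ell n x =
      ∑ k ∈ Finset.range (n / 2 + 1),
        (-1 : ℝ) ^ k *
          (Real.Gamma (ell + n - k) * Real.Gamma lam /
            ((k.factorial : ℝ) * Real.Gamma ell)) *
          ∑ j ∈ Finset.range ((n - 2 * k) / 2 + 1),
            (lam + n - 2 * (k + j)) /
                ((j.factorial : ℝ) * Real.Gamma (lam + n - 2 * k + 1 - j)) *
              gegenbauer lam (n - 2 * (k + j)) x := by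
  rw [gegenbauer]
  refine Finset.sum_congr rfl fun k hk => ?_
  rw [Finset.mem_range, Nat.lt_succ_iff] at hk
  have h2k : 2 * k ≤ n := by omega
  have c1 : ((n - 2 * k : ℕ) : ℝ) = (n : ℝ) - 2 * k := by
    push_cast [Nat.cast_sub h2k]; ring
  rw [monomial_expansion lam hlam (n - 2 * k) x]
  have hsum : ∑ j ∈ range ((n - 2 * k) / 2 + 1),
      (lam + ((n - 2 * k : ℕ) : ℝ) - 2 * j) /
          ((j.factorial : ℝ) * Real.Gamma (lam + ((n - 2 * k : ℕ) : ℝ) + 1 - j)) *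
        gegenbauer lam (n - 2 * k - 2 * j) x
      = ∑ j ∈ range ((n - 2 * k) / 2 + 1),
        (lam + n - 2 * (k + j)) /
            ((j.factorial : ℝ) * Real.Gamma (lam + n - 2 * k + 1 - j)) *
          gegenbauer lam (n - 2 * (k + j)) x := by
    refine Finset.sum_congr rfl fun j hj => ?_
    have e1 : n - 2 * k - 2 * j = n - 2 * (k + j) := by omega
    rw [e1, c1]
    congr 2
    · push_cast; ring
    · ring
  rw [hsum]
  have h1 : ((k.factorial : ℝ)) ≠ 0 := by positivity
  have h2 : (((n - 2 * k).factorial : ℝ)) ≠ 0 := by positivity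
  have h3 : Real.Gamma ell ≠ 0 := (Real.Gamma_pos_of_pos hell).ne'
  field_simp
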